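/- Let E be a finite-dimensional real inner product space and let A₁, A₂ be two p-dimensional subspaces of E. Define α₁ to be the Hausdorff distance between the unit spheres of A₁ and A₂ measured in the projective angle metric (equivalently the largest principal angle between A₁ and A₂), and α₂ the angle between the lines Λ^p A₁ and Λ^p A₂ in Λ^p E. Then α₁ ≤ α₂ ≤ √p · α₁. -/

import Mathlib

open Real Set Finset

private lemma aux_tan_mul {a b : ℝ} (ha : 0 < a) (hab : a ≤ b) (hb : b < Real.pi / 2) :
    b * Real.tan a ≤ a * Real.tan b := by
  have hb0 : 0 < b := lt_of_lt_of_le ha hab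
  have hcosb : ∀ x ∈ Set.Icc (0:ℝ) b, 0 < Real.cos x := by
    intro x hx
    exact Real.cos_pos_of_mem_Ioo ⟨by linarith [Real.pi_pos, hx.1], lt_of_le_of_lt hx.2 hb⟩
  have hconv : ConvexOn ℝ (Set.Icc (0:ℝ) b) Real.tan := by
    have hmono : MonotoneOn (deriv Real.tan) (interior (Set.Icc (0:ℝ) b)) := by
      rw [interior_Icc]
      intro x hx y hy hxy
      rw [Real.deriv_tan, Real.deriv_tan]
      have hcx : 0 < Real.cos x := hcosb x ⟨hx.1.le, hx.2.le⟩
      have hcy : 0 < Real.cos y := hcosb y ⟨(hx.1.trans_le hxy).le.trans le_rfl, hy.2.le⟩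
      have : Real.cos y ≤ Real.cos x :=
        Real.cos_le_cos_of_nonneg_of_le_pi hx.1.le
          (by linarith [Real.pi_pos, hy.2, hx.1]) hxy
      have h2 : Real.cos y ^ 2 ≤ Real.cos x ^ 2 := by nlinarith
      exact one_div_le_one_div_of_le (by positivity) h2
    refine hmono.convexOn_of_deriv (convex_Icc _ _) ?_ ?_
    · intro x hx
      exact (Real.continuousAt_tan.2 (hcosb x hx).ne').continuousWithinAt
    · rw [interior_Icc]
      intro x hx
      exact (Real.differentiableAt_tan.2
        (hcosb x ⟨hx.1.le, hx.2.le⟩).ne').differentiableWithinAt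
  have habdiv : a / b ≤ 1 := div_le_one_of_le₀ hab hb0.le
  have key : Real.tan ((a / b) * b + (1 - a / b) * 0)
      ≤ (a / b) * Real.tan b + (1 - a / b) * Real.tan 0 :=
    hconv.2 ⟨hb0.le, le_rfl⟩ ⟨le_rfl, hb0.le⟩
      (div_nonneg ha.le hb0.le) (by linarith) (by ring)
  simp only [Real.tan_zero, mul_zero, add_zero,
    div_mul_cancel₀ _ hb0.ne'] at key
  have := mul_le_mul_of_nonneg_left key hb0.le
  calc b * Real.tan a ≤ b * (a / b * Real.tan b) := this
    _ = a * Real.tan b := by field_simp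

private lemma aux_cos_sqrt_pos {x : ℝ} (hx : x ∈ Set.Ico (0:ℝ) ((Real.pi/2)^2)) :
    0 < Real.cos (Real.sqrt x) := by
  have h1 : Real.sqrt x < Real.pi / 2 := by
    have := Real.sqrt_lt_sqrt hx.1 hx.2
    rwa [Real.sqrt_sq (by positivity)] at this
  exact Real.cos_pos_of_mem_Ioo ⟨by linarith [Real.sqrt_nonneg x, Real.pi_pos], h1⟩

private lemma aux_hasDerivAt {x : ℝ} (hx : x ∈ Set.Ioo (0:ℝ) ((Real.pi/2)^2)) :
    HasDerivAt (fun t => Real.log (Real.cos (Real.sqrt t)))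
      (-Real.tan (Real.sqrt x) / (2 * Real.sqrt x)) x := by
  have hs : 0 < Real.sqrt x := Real.sqrt_pos.2 hx.1
  have hcos : 0 < Real.cos (Real.sqrt x) := aux_cos_sqrt_pos ⟨hx.1.le, hx.2⟩
  have h1 : HasDerivAt (fun t => Real.sqrt t) (1 / (2 * Real.sqrt x)) x :=
    Real.hasDerivAt_sqrt hx.1.ne'
  have h2 : HasDerivAt Real.cos (-Real.sin (Real.sqrt x)) (Real.sqrt x) :=
    Real.hasDerivAt_cos _
  have h3 : HasDerivAt Real.log (Real.cos (Real.sqrt x))⁻¹ (Real.cos (Real.sqrt x)) :=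
    Real.hasDerivAt_log hcos.ne'
  have := h3.comp x (h2.comp x h1)
  refine this.congr_deriv ?_
  rw [Real.tan_eq_sin_div_cos]
  field_simp

private lemma aux_concave :
    ConcaveOn ℝ (Set.Ico (0:ℝ) ((Real.pi/2)^2))
      (fun t => Real.log (Real.cos (Real.sqrt t))) := by
  have hanti : AntitoneOn (deriv fun t => Real.log (Real.cos (Real.sqrt t)))
      (interior (Set.Ico (0:ℝ) ((Real.pi/2)^2))) := by
    rw [interior_Ico]
    intro x hx y hy hxy
    rw [(aux_hasDerivAt hx).deriv, (aux_hasDerivAt hy).deriv]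
    have hsx : 0 < Real.sqrt x := Real.sqrt_pos.2 hx.1
    have hsy : 0 < Real.sqrt y := Real.sqrt_pos.2 hy.1
    have hss : Real.sqrt x ≤ Real.sqrt y := Real.sqrt_le_sqrt hxy
    have hylt : Real.sqrt y < Real.pi / 2 := by
      have := Real.sqrt_lt_sqrt hy.1.le hy.2
      rwa [Real.sqrt_sq (by positivity)] at this
    have := aux_tan_mul hsx hss hylt
    rw [div_le_div_iff₀ (by positivity) (by positivity)]
    rw [neg_mul, neg_mul, neg_le_neg_iff]
    nlinarith
  refine hanti.concaveOn_of_deriv (convex_Ico _ _) ?_ ?_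
  · apply ContinuousOn.log
    · exact (Real.continuous_cos.comp Real.continuous_sqrt).continuousOn
    · intro x hx
      exact (aux_cos_sqrt_pos hx).ne'
  · rw [interior_Ico]
    intro x hx
    exact (aux_hasDerivAt hx).differentiableAt.differentiableWithinAt

private lemma aux_cos_mul {x y : ℝ} (hx : 0 ≤ x) (hy : 0 ≤ y)
    (hxy : x + y ≤ (Real.pi/2)^2) :
    Real.cos (Real.sqrt (x + y)) ≤ Real.cos (Real.sqrt x) * Real.cos (Real.sqrt y) := by
  have hcx : 0 ≤ Real.cos (Real.sqrt x) := by
    rcases lt_or_ge x ((Real.pi/2)^2) with h | h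
    · exact (aux_cos_sqrt_pos ⟨hx, h⟩).le
    · have : x = (Real.pi/2)^2 := le_antisymm (by nlinarith) h
      rw [this, Real.sqrt_sq (by positivity), Real.cos_pi_div_two]
  have hcy : 0 ≤ Real.cos (Real.sqrt y) := by
    rcases lt_or_ge y ((Real.pi/2)^2) with h | h
    · exact (aux_cos_sqrt_pos ⟨hy, h⟩).le
    · have : y = (Real.pi/2)^2 := le_antisymm (by nlinarith) h
      rw [this, Real.sqrt_sq (by positivity), Real.cos_pi_div_two]
  rcases eq_or_lt_of_le hxy with heq | hlt
  · rw [heq, Real.sqrt_sq (by positivity), Real.cos_pi_div_two]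
    exact mul_nonneg hcx hcy
  rcases eq_or_lt_of_le hx with hx0 | hx0
  · rw [← hx0, zero_add, Real.sqrt_zero, Real.cos_zero, one_mul]
  rcases eq_or_lt_of_le hy with hy0 | hy0
  · rw [← hy0, add_zero, Real.sqrt_zero, Real.cos_zero, mul_one]
  set f := fun t => Real.log (Real.cos (Real.sqrt t)) with hf
  have hmemxy : x + y ∈ Set.Ico (0:ℝ) ((Real.pi/2)^2) := ⟨by positivity, hlt⟩
  have hmem0 : (0:ℝ) ∈ Set.Ico (0:ℝ) ((Real.pi/2)^2) := ⟨le_rfl, by positivity⟩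
  have hs : 0 < x + y := by linarith
  have hf0 : f 0 = 0 := by simp [hf]
  have h1 : (x / (x + y)) * f (x + y) + (y / (x + y)) * f 0
      ≤ f ((x / (x + y)) * (x + y) + (y / (x + y)) * 0) :=
    aux_concave.2 hmemxy hmem0 (by positivity) (by positivity)
      (by field_simp <;> ring)
  have h2 : (y / (x + y)) * f (x + y) + (x / (x + y)) * f 0
      ≤ f ((y / (x + y)) * (x + y) + (x / (x + y)) * 0) :=
    aux_concave.2 hmemxy hmem0 (by positivity) (by positivity)
      (by field_simp <;> ring)
  have ex : x / (x + y) * (x + y) = x := div_mul_cancel₀ _ hs.ne'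
  have ey : y / (x + y) * (x + y) = y := div_mul_cancel₀ _ hs.ne'
  simp only [hf0, mul_zero, add_zero, ex, ey] at h1 h2
  have hsub : f (x + y) ≤ f x + f y := by
    have e1 : x / (x + y) + y / (x + y) = 1 := by
      rw [← add_div, div_self hs.ne']
    calc f (x + y) = (x / (x + y)) * f (x + y) + (y / (x + y)) * f (x + y) := by
          rw [← add_mul, e1, one_mul]
      _ ≤ f x + f y := add_le_add h1 h2
  have hpx : 0 < Real.cos (Real.sqrt x) := aux_cos_sqrt_pos ⟨hx, by linarith⟩
  have hpy : 0 < Real.cos (Real.sqrt y) := aux_cos_sqrt_pos ⟨hy, by linarith⟩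
  have hpxy : 0 < Real.cos (Real.sqrt (x + y)) := aux_cos_sqrt_pos hmemxy
  calc Real.cos (Real.sqrt (x + y)) = Real.exp (f (x + y)) := by
        rw [hf]; simp only []; rw [Real.exp_log hpxy]
    _ ≤ Real.exp (f x + f y) := Real.exp_le_exp.2 hsub
    _ = Real.cos (Real.sqrt x) * Real.cos (Real.sqrt y) := by
        rw [Real.exp_add, hf]; simp only []; rw [Real.exp_log hpx, Real.exp_log hpy]

private lemma aux_prod_cos {ι : Type*} (s : Finset ι) (f : ι → ℝ)
    (h0 : ∀ i ∈ s, 0 ≤ f i) (hsum : ∑ i ∈ s, f i ^ 2 ≤ (Real.pi/2)^2) :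
    Real.cos (Real.sqrt (∑ i ∈ s, f i ^ 2)) ≤ ∏ i ∈ s, Real.cos (f i) := by
  induction s using Finset.cons_induction with
  | empty => simp
  | cons a s ha ih =>
    rw [Finset.sum_cons] at hsum ⊢
    rw [Finset.prod_cons]
    have hS0 : 0 ≤ ∑ i ∈ s, f i ^ 2 :=
      Finset.sum_nonneg fun i _ => sq_nonneg _
    have ha0 : 0 ≤ f a := h0 a (Finset.mem_cons_self _ _)
    have haπ : f a ≤ Real.pi / 2 := by
      by_contra hcon
      push_neg at hcon
      have : (Real.pi / 2) ^ 2 < f a ^ 2 := by nlinarith [Real.pi_pos]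
      nlinarith
    have hca : 0 ≤ Real.cos (f a) :=
      Real.cos_nonneg_of_mem_Icc ⟨by linarith [Real.pi_pos], haπ⟩
    have key := aux_cos_mul (sq_nonneg (f a)) hS0 hsum
    rw [Real.sqrt_sq ha0] at key
    have hSle : ∑ i ∈ s, f i ^ 2 ≤ (Real.pi/2)^2 := by nlinarith
    have ihs := ih (fun i hi => h0 i (Finset.mem_cons_of_mem hi)) hSle
    have hcS : 0 ≤ Real.cos (Real.sqrt (∑ i ∈ s, f i ^ 2)) := by
      rcases eq_or_lt_of_le hSle with h | h
      · rw [h, Real.sqrt_sq (by positivity), Real.cos_pi_div_two]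
      · exact (aux_cos_sqrt_pos ⟨hS0, h⟩).le
    calc Real.cos (Real.sqrt (f a ^ 2 + ∑ i ∈ s, f i ^ 2))
        ≤ Real.cos (f a) * Real.cos (Real.sqrt (∑ i ∈ s, f i ^ 2)) := key
      _ ≤ Real.cos (f a) * ∏ i ∈ s, Real.cos (f i) :=
          mul_le_mul_of_nonneg_left ihs hca

/-- Let `A₁, A₂` be `p`-dimensional subspaces of a finite-dimensional real inner product
space, with orthonormal bases `u`, `v` realizing the principal angles
`θ₁ ≥ … ≥ θ_p` (i.e. `⟪u i, v j⟫ = δᵢⱼ cos θⱼ`).  Let `α₁ := θ₁` be the largest principal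
angle (which equals the Hausdorff distance between `P(A₁)` and `P(A₂)` in the projective
angle metric), and let `α₂` be the projective angle between the lines `Λ^p A₁` and
`Λ^p A₂` in `Λ^p E`, computed via the Gram determinant formula for the induced inner
product.  Then `α₁ ≤ α₂ ≤ √p · α₁`. -/
theorem principal_angle_le_exterior_angle {E : Type*} [NormedAddCommGroup E]
    [InnerProductSpace ℝ E] [FiniteDimensional ℝ E]
    (p : ℕ) (hp : 0 < p) (A₁ A₂ : Submodule ℝ E)
    (θ : Fin p → ℝ) (hθ0 : ∀ i, 0 ≤ θ i) (hθπ : ∀ i, θ i ≤ Real.pi / 2)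
    (hanti : Antitone θ)
    (u v : Fin p → E) (hu : Orthonormal ℝ u) (hv : Orthonormal ℝ v)
    (hA₁ : A₁ = Submodule.span ℝ (Set.range u))
    (hA₂ : A₂ = Submodule.span ℝ (Set.range v))
    (huv : ∀ i j, (inner ℝ (u i) (v j) : ℝ) = if i = j then Real.cos (θ j) else 0) :
    θ ⟨0, hp⟩ ≤ Real.arccos |(Matrix.of fun i j => (inner ℝ (u i) (v j) : ℝ)).det| ∧
    Real.arccos |(Matrix.of fun i j => (inner ℝ (u i) (v j) : ℝ)).det|
      ≤ Real.sqrt p * θ ⟨0, hp⟩ := by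
  set i0 : Fin p := ⟨0, hp⟩
  have hmat : (Matrix.of fun i j => (inner ℝ (u i) (v j) : ℝ))
      = Matrix.diagonal fun j => Real.cos (θ j) := by
    ext i j
    rw [Matrix.of_apply, huv, Matrix.diagonal_apply]
    by_cases h : i = j <;> simp [h]
  have hdet : (Matrix.of fun i j => (inner ℝ (u i) (v j) : ℝ)).det
      = ∏ i, Real.cos (θ i) := by rw [hmat, Matrix.det_diagonal]
  have hcos0 : ∀ i, 0 ≤ Real.cos (θ i) := fun i =>
    Real.cos_nonneg_of_mem_Icc ⟨by linarith [Real.pi_pos, hθ0 i], hθπ i⟩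
  have hcos1 : ∀ i, Real.cos (θ i) ≤ 1 := fun i => Real.cos_le_one _
  set D := ∏ i, Real.cos (θ i) with hD
  have hD0 : 0 ≤ D := Finset.prod_nonneg fun i _ => hcos0 i
  have hD1 : D ≤ 1 := Finset.prod_le_one (fun i _ => hcos0 i) (fun i _ => hcos1 i)
  have habs : |(Matrix.of fun i j => (inner ℝ (u i) (v j) : ℝ)).det| = D := by
    rw [hdet]
    exact abs_of_nonneg hD0
  rw [habs]
  have hθ0mem : 0 ≤ θ i0 := hθ0 i0
  have hθπmem : θ i0 ≤ Real.pi / 2 := hθπ i0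
  constructor
  · -- left inequality
    have hDle : D ≤ Real.cos (θ i0) := by
      calc D = Real.cos (θ i0) * ∏ i ∈ Finset.univ.erase i0, Real.cos (θ i) :=
            (Finset.mul_prod_erase _ _ (Finset.mem_univ i0)).symm
        _ ≤ Real.cos (θ i0) * 1 := by
            apply mul_le_mul_of_nonneg_left _ (hcos0 i0)
            exact Finset.prod_le_one (fun i _ => hcos0 i) (fun i _ => hcos1 i)
        _ = Real.cos (θ i0) := mul_one _
    have := Real.strictAntiOn_arccos.antitoneOn
        (Set.mem_Icc.2 ⟨by linarith, hD1⟩)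
        (Set.mem_Icc.2 ⟨by linarith [Real.neg_one_le_cos (θ i0)],
          Real.cos_le_one _⟩) hDle
    rwa [Real.arccos_cos hθ0mem (by linarith [Real.pi_pos])] at this
  · -- right inequality
    set S := ∑ i, θ i ^ 2 with hS
    have hS0 : 0 ≤ S := Finset.sum_nonneg fun i _ => sq_nonneg _
    have hθle : ∀ i, θ i ≤ θ i0 := by
      intro i
      exact hanti (show i0 ≤ i by simp [i0, Fin.le_def])
    have hSle : S ≤ p * θ i0 ^ 2 := by
      calc S ≤ ∑ _i : Fin p, θ i0 ^ 2 := by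
            apply Finset.sum_le_sum
            intro i _
            exact pow_le_pow_left₀ (hθ0 i) (hθle i) 2
        _ = p * θ i0 ^ 2 := by
            rw [Finset.sum_const, Finset.card_univ, Fintype.card_fin, nsmul_eq_mul]
    have hsqrtS : Real.sqrt S ≤ Real.sqrt p * θ i0 := by
      calc Real.sqrt S ≤ Real.sqrt (p * θ i0 ^ 2) := Real.sqrt_le_sqrt hSle
        _ = Real.sqrt p * θ i0 := by
            rw [Real.sqrt_mul (by positivity), Real.sqrt_sq (hθ0 i0)]
    rcases le_or_gt (Real.pi / 2) (Real.sqrt S) with h | h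
    · calc Real.arccos D ≤ Real.pi / 2 := Real.arccos_le_pi_div_two.2 hD0
        _ ≤ Real.sqrt S := h
        _ ≤ Real.sqrt p * θ i0 := hsqrtS
    · have hSlt : S ≤ (Real.pi / 2) ^ 2 := by
        have := Real.sq_sqrt hS0
        nlinarith [Real.sqrt_nonneg S]
      have hprod := aux_prod_cos Finset.univ θ (fun i _ => hθ0 i) hSlt
      have hcsS : Real.cos (Real.sqrt S) ≤ D := hprod
      have hstep : Real.arccos D ≤ Real.sqrt S := by
        have := Real.strictAntiOn_arccos.antitoneOn
            (Set.mem_Icc.2 ⟨by linarith [Real.neg_one_le_cos (Real.sqrt S)],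
              Real.cos_le_one _⟩)
            (Set.mem_Icc.2 ⟨by linarith, hD1⟩) hcsS
        rwa [Real.arccos_cos (Real.sqrt_nonneg S) (by linarith [Real.pi_pos])] at this
      exact hstep.trans hsqrtS
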